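/- Let V ⊆ ℝ^n be a regular space with capacity c, f a feasible flow, and P, Q shortest augmenting r-paths for f (of minimum 1-norm among all augmenting r-paths). Then P∧Q and P∨Q are also shortest augmenting r-paths for f. -/
import Mathlib


open Finset

variable {n : ℕ}

/-- The support of a vector. -/
def supp (x : Fin n → ℝ) : Set (Fin n) := {j | x j ≠ 0}

/-- A nonzero vector of `V` is elementary if no nonzero vector of `V` has support
properly contained in its support. -/
def IsElementary (V : Submodule ℝ (Fin n → ℝ)) (x : Fin n → ℝ) : Prop :=
  x ∈ V ∧ x ≠ 0 ∧ ∀ y ∈ V, y ≠ 0 → ¬ (supp y ⊂ supp x)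

/-- A primitive vector: elementary with entries in `{-1, 0, 1}`. -/
def IsPrimitive (V : Submodule ℝ (Fin n → ℝ)) (x : Fin n → ℝ) : Prop :=
  IsElementary V x ∧ ∀ j, x j ∈ ({-1, 0, 1} : Set ℝ)

/-- `y` conforms to `x`. -/
def Conforms (y x : Fin n → ℝ) : Prop := ∀ j, y j ≠ 0 → y j * x j > 0

/-- A regular space: the kernel of a totally unimodular matrix. -/
def IsRegularSpace (V : Submodule ℝ (Fin n → ℝ)) : Prop :=
  ∃ (m : ℕ) (A : Matrix (Fin m) (Fin n) ℝ),
    A.IsTotallyUnimodular ∧ V = LinearMap.ker A.mulVecLin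

/-- An `r`-path: a primitive vector with value `+1` at `r`. -/
def IsRPath (V : Submodule ℝ (Fin n → ℝ)) (r : Fin n) (P : Fin n → ℝ) : Prop :=
  IsPrimitive V P ∧ P r = 1

/-- Feasibility with respect to capacity `c` (no constraint at `r`). -/
def Feasible (c : Fin n → ℝ) (r : Fin n) (f : Fin n → ℝ) : Prop :=
  ∀ j, j ≠ r → 0 ≤ f j ∧ f j ≤ c j

/-- An `r`-path `P` is augmenting for the flow `f`. -/
def Augmenting (V : Submodule ℝ (Fin n → ℝ)) (c : Fin n → ℝ) (r : Fin n)
    (f P : Fin n → ℝ) : Prop :=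
  IsRPath V r P ∧ ∃ ε : ℝ, 0 < ε ∧ Feasible c r (f + ε • P)

/-- The 1-norm. -/
def onorm (x : Fin n → ℝ) : ℝ := ∑ j, |x j|

/-- A shortest augmenting `r`-path. -/
def ShortestAug (V : Submodule ℝ (Fin n → ℝ)) (c : Fin n → ℝ) (r : Fin n)
    (f P : Fin n → ℝ) : Prop :=
  Augmenting V c r f P ∧ ∀ Q, Augmenting V c r f Q → onorm P ≤ onorm Q

/-- `g` is obtained from `f` by maximal augmentation along `P`. -/
def MaxAug (c : Fin n → ℝ) (r : Fin n) (f P g : Fin n → ℝ) : Prop :=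
  ∃ ε : ℝ, 0 < ε ∧ g = f + ε • P ∧ Feasible c r g ∧
    ∀ ε' : ℝ, ε < ε' → ¬ Feasible c r (f + ε' • P)

/-- A conformal primitive decomposition of `P + Q` in which `M` and `J` are the two
`r`-path summands (`M` playing the role of `P ∧ Q` and `J` of `P ∨ Q`). -/
def MeetJoinDecomp (V : Submodule ℝ (Fin n → ℝ)) (r : Fin n)
    (P Q M J : Fin n → ℝ) : Prop :=
  ∃ (k : ℕ) (p : Fin k → Fin n → ℝ) (a b : Fin k),
    (∀ i, IsPrimitive V (p i)) ∧ (∀ i, Conforms (p i) (P + Q)) ∧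
    (∑ i, p i) = P + Q ∧ a ≠ b ∧ p a = M ∧ p b = J ∧
    p a r = 1 ∧ p b r = 1 ∧ ∀ i, p i r = 1 → i = a ∨ i = b

lemma aug_of_conforms (V : Submodule ℝ (Fin n → ℝ)) (c : Fin n → ℝ) (r : Fin n)
    (f P Q R : Fin n → ℝ) (hf : Feasible c r f)
    (hP : Augmenting V c r f P) (hQ : Augmenting V c r f Q)
    (hR : IsRPath V r R) (hconf : Conforms R (P + Q)) :
    Augmenting V c r f R := by
  obtain ⟨hPpath, εP, hεP, hfP⟩ := hP
  obtain ⟨hQpath, εQ, hεQ, hfQ⟩ := hQ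
  refine ⟨hR, min εP εQ, lt_min hεP hεQ, fun j hj => ?_⟩
  have hεle1 : min εP εQ ≤ εP := min_le_left _ _
  have hεle2 : min εP εQ ≤ εQ := min_le_right _ _
  have hεpos : (0:ℝ) < min εP εQ := lt_min hεP hεQ
  have hfj := hf j hj
  have hPj := hPpath.1.2 j
  have hQj := hQpath.1.2 j
  have hRj := hR.1.2 j
  have hfPj := hfP j hj
  have hfQj := hfQ j hj
  simp only [Set.mem_insert_iff, Set.mem_singleton_iff] at hPj hQj hRj
  simp only [Pi.add_apply, Pi.smul_apply, smul_eq_mul] at hfPj hfQj ⊢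
  rcases hRj with h1 | h0 | h1
  · -- R j = -1 : need f j ≥ min
    have hne : R j ≠ 0 := by rw [h1]; norm_num
    have := hconf j hne
    simp only [Pi.add_apply, h1] at this
    have hPQ : P j + Q j < 0 := by nlinarith
    have : P j = -1 ∨ Q j = -1 := by
      rcases hPj with h|h|h <;> rcases hQj with h'|h'|h' <;>
        simp [h, h'] at hPQ ⊢ <;> linarith
    rcases this with h|h
    · rw [h1]; constructor <;> [nlinarith [hfPj.1]; nlinarith [hfj.2]]
    · rw [h1]; constructor <;> [nlinarith [hfQj.1]; nlinarith [hfj.2]]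
  · rw [h0]; simpa using hfj
  · have hne : R j ≠ 0 := by rw [h1]; norm_num
    have := hconf j hne
    simp only [Pi.add_apply, h1] at this
    have hPQ : 0 < P j + Q j := by nlinarith
    have : P j = 1 ∨ Q j = 1 := by
      rcases hPj with h|h|h <;> rcases hQj with h'|h'|h' <;>
        simp [h, h'] at hPQ ⊢ <;> linarith
    rcases this with h|h
    · rw [h1]; constructor <;> [nlinarith [hfj.1]; nlinarith [hfPj.2]]
    · rw [h1]; constructor <;> [nlinarith [hfj.1]; nlinarith [hfQj.2]]

lemma onorm_nonneg' (x : Fin n → ℝ) : 0 ≤ onorm x :=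
  Finset.sum_nonneg fun j _ => abs_nonneg _

lemma sum_onorm_eq (k : ℕ) (p : Fin k → Fin n → ℝ) (S : Fin n → ℝ)
    (hconf : ∀ i, Conforms (p i) S) (hsum : (∑ i, p i) = S) :
    ∑ i, onorm (p i) = onorm S := by
  unfold onorm
  rw [Finset.sum_comm]
  refine Finset.sum_congr rfl fun j _ => ?_
  have hsj : ∑ i, p i j = S j := by
    have := congrFun hsum j
    simpa [Finset.sum_apply] using this
  rcases lt_trichotomy (S j) 0 with h | h | h
  · have hle : ∀ i ∈ Finset.univ, p i j ≤ 0 := fun i _ => by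
      by_contra hpos
      push_neg at hpos
      have := hconf i j (ne_of_gt hpos)
      nlinarith
    calc ∑ i, |p i j| = ∑ i, -(p i j) := by
          refine Finset.sum_congr rfl fun i hi => abs_of_nonpos (hle i hi)
      _ = |S j| := by rw [Finset.sum_neg_distrib, hsj, abs_of_neg h]
  · have hz : ∀ i ∈ Finset.univ, p i j = 0 := fun i _ => by
      by_contra hne
      have := hconf i j hne
      rw [h] at this; nlinarith
    rw [Finset.sum_congr rfl fun i hi => by rw [hz i hi, abs_zero], h]
    simp
  · have hle : ∀ i ∈ Finset.univ, 0 ≤ p i j := fun i _ => by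
      by_contra hneg
      push_neg at hneg
      have := hconf i j (ne_of_lt hneg)
      nlinarith
    calc ∑ i, |p i j| = ∑ i, p i j := by
          refine Finset.sum_congr rfl fun i hi => abs_of_nonneg (hle i hi)
      _ = |S j| := by rw [hsj, abs_of_pos h]

theorem stmt10 (V : Submodule ℝ (Fin n → ℝ)) (hV : IsRegularSpace V)
    (r : Fin n) (c : Fin n → ℝ) (hc : ∀ j, j ≠ r → 0 ≤ c j)
    (f : Fin n → ℝ) (hfV : f ∈ V) (hf : Feasible c r f)
    (P Q M J : Fin n → ℝ)
    (hP : ShortestAug V c r f P) (hQ : ShortestAug V c r f Q)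
    (hMJ : MeetJoinDecomp V r P Q M J) :
    ShortestAug V c r f M ∧ ShortestAug V c r f J := by
  obtain ⟨k, p, a, b, hprim, hconf, hsum, hab, hpa, hpb, har, hbr, _⟩ := hMJ
  have hMpath : IsRPath V r M := ⟨hpa ▸ hprim a, hpa ▸ har⟩
  have hJpath : IsRPath V r J := ⟨hpb ▸ hprim b, hpb ▸ hbr⟩
  have hMaug : Augmenting V c r f M :=
    aug_of_conforms V c r f P Q M hf hP.1 hQ.1 hMpath (hpa ▸ hconf a)
  have hJaug : Augmenting V c r f J :=
    aug_of_conforms V c r f P Q J hf hP.1 hQ.1 hJpath (hpb ▸ hconf b)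
  -- length accounting
  have hPQeq : onorm P = onorm Q := le_antisymm (hP.2 Q hQ.1) (hQ.2 P hP.1)
  have hMge : onorm P ≤ onorm M := hP.2 M hMaug
  have hJge : onorm P ≤ onorm J := hP.2 J hJaug
  have hsum_onorm : ∑ i, onorm (p i) = onorm (P + Q) :=
    sum_onorm_eq k p (P + Q) hconf hsum
  have htri : onorm (P + Q) ≤ onorm P + onorm Q := by
    unfold onorm
    rw [← Finset.sum_add_distrib]
    exact Finset.sum_le_sum fun j _ => by simpa using abs_add_le (P j) (Q j)
  have hpair : onorm M + onorm J ≤ ∑ i, onorm (p i) := by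
    have h1 : ∑ i ∈ ({a, b} : Finset (Fin k)), onorm (p i) = onorm M + onorm J := by
      rw [Finset.sum_pair hab, hpa, hpb]
    rw [← h1]
    exact Finset.sum_le_sum_of_subset_of_nonneg (Finset.subset_univ _)
      (fun i _ _ => onorm_nonneg' (p i))
  have hMle : onorm M ≤ onorm P := by
    have := hpair.trans (hsum_onorm ▸ htri)
    linarith
  have hJle : onorm J ≤ onorm P := by
    have := hpair.trans (hsum_onorm ▸ htri)
    linarith
  have hMeq : onorm M = onorm P := le_antisymm hMle hMge
  have hJeq : onorm J = onorm P := le_antisymm hJle hJge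
  exact ⟨⟨hMaug, fun R hR => hMeq ▸ hP.2 R hR⟩,
         ⟨hJaug, fun R hR => hJeq ▸ hP.2 R hR⟩⟩
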